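/- Let n ≥ 1, let φ : ℝⁿ → ℂ be a Schwartz function, and for each s ∈ (0, 1] define H_s : ℝⁿ → ℂ by H_s(ξ) := ∫_{ℝⁿ} e^{i s ⟨z, ξ⟩} φ(z) dz. Then for every order k ∈ ℕ there is a constant C_k > 0 such that for all s ∈ (0, 1] and all ξ ∈ ℝⁿ, ‖ (k-th iterated derivative of H_s at ξ) ‖ ≤ C_k (1 + |ξ|)^{−k}. (In other words, the family {H_s : s ∈ (0,1]} is bounded in the symbol class S⁰, i.e. each ξ-derivative of order k decays like ⟨ξ⟩^{−k} uniformly in s.) -/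

import Mathlib

open MeasureTheory

open Real FourierTransform

/-- Uniform `S⁰` symbol estimate for the family of oscillatory integrals
`H_s(ξ) := ∫ e^{is⟨z,ξ⟩} φ(z) dz`, `s ∈ (0,1]`, with `φ` Schwartz: every
`ξ`-derivative of order `k` decays like `(1+|ξ|)^{-k}` uniformly in `s`. -/
theorem averaging_symbol_class_zero (n : ℕ) (hn : 0 < n)
    (φ : SchwartzMap (EuclideanSpace ℝ (Fin n)) ℂ) :
    ∀ k : ℕ, ∃ C : ℝ, 0 < C ∧ ∀ s : ℝ, 0 < s → s ≤ 1 →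
      ∀ ξ : EuclideanSpace ℝ (Fin n),
        ‖iteratedFDeriv ℝ k
            (fun ξ' : EuclideanSpace ℝ (Fin n) =>
              ∫ z : EuclideanSpace ℝ (Fin n),
                Complex.exp (Complex.I * ((s * (inner ℝ z ξ' : ℝ) : ℝ) : ℂ)) * φ z) ξ‖
          ≤ C * (1 + ‖ξ‖) ^ (-(k : ℝ)) := by
  intro k
  set ψ : SchwartzMap (EuclideanSpace ℝ (Fin n)) ℂ := SchwartzMap.fourierTransformCLM ℝ φ with hψ
  set S : ℝ := 2 ^ k *
    (Finset.Iic (k, k)).sup (fun m => SchwartzMap.seminorm ℝ m.1 m.2) ψ with hS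
  have hS0 : 0 ≤ S := by
    apply mul_nonneg (by positivity)
    exact apply_nonneg _ ψ
  refine ⟨S + 1, by positivity, ?_⟩
  intro s hs hs1 ξ
  set c : ℝ := -(s / (2 * π)) with hc
  have hπ : (0 : ℝ) < 2 * π := by positivity
  have hcabs : |c| = s / (2 * π) := by
    rw [hc, abs_neg, abs_of_pos (by positivity)]
  have hcle : |c| ≤ 1 := by
    rw [hcabs, div_le_one hπ]
    nlinarith [Real.pi_gt_three]
  set L : EuclideanSpace ℝ (Fin n) →L[ℝ] EuclideanSpace ℝ (Fin n) :=
    c • ContinuousLinearMap.id ℝ (EuclideanSpace ℝ (Fin n)) with hL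
  have hLapp : ∀ x, L x = c • x := fun x => rfl
  have hLnorm : ‖L‖ ≤ |c| := by
    calc ‖L‖ ≤ ‖c‖ * ‖ContinuousLinearMap.id ℝ (EuclideanSpace ℝ (Fin n))‖ :=
          ContinuousLinearMap.opNorm_smul_le c _
      _ ≤ |c| * 1 := by
          rw [Real.norm_eq_abs]
          gcongr
          exact ContinuousLinearMap.norm_id_le
      _ = |c| := mul_one _
  have hfun : (fun ξ' : EuclideanSpace ℝ (Fin n) =>
        ∫ z : EuclideanSpace ℝ (Fin n),
          Complex.exp (Complex.I * ((s * (inner ℝ z ξ' : ℝ) : ℝ) : ℂ)) * φ z)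
      = (⇑ψ) ∘ (⇑L) := by
    funext ξ'
    have h1 : ψ (L ξ') =
        ∫ z : EuclideanSpace ℝ (Fin n),
          Complex.exp ((↑(-2 * π * (inner ℝ z (L ξ') : ℝ)) * Complex.I)) • φ z := by
      rw [hψ, SchwartzMap.fourierTransformCLM_apply, SchwartzMap.fourier_coe, Real.fourier_eq']
    rw [Function.comp_apply, h1]
    congr 1
    funext z
    have hreal : -2 * π * (inner ℝ z (L ξ') : ℝ) = s * (inner ℝ z ξ' : ℝ) := by
      rw [hLapp, real_inner_smul_right, hc]
      have : (π : ℝ) ≠ 0 := Real.pi_ne_zero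
      field_simp
    rw [smul_eq_mul, hreal, mul_comm Complex.I (((s * (inner ℝ z ξ' : ℝ) : ℝ) : ℂ))]
  rw [hfun, L.iteratedFDeriv_comp_right (ψ.smooth ⊤) ξ (by exact_mod_cast le_top)]
  have hdecay : (1 + ‖L ξ‖) ^ k * ‖iteratedFDeriv ℝ k (⇑ψ) (L ξ)‖ ≤ S := by
    rw [hS]
    exact SchwartzMap.one_add_le_sup_seminorm_apply (m := (k, k)) le_rfl le_rfl ψ (L ξ)
  have hLξ : ‖L ξ‖ = |c| * ‖ξ‖ := by
    rw [hLapp, norm_smul, Real.norm_eq_abs]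
  have h1Lξ : (0 : ℝ) < 1 + ‖L ξ‖ := by positivity
  have h1ξ : (0 : ℝ) < 1 + ‖ξ‖ := by positivity
  have hψle : ‖iteratedFDeriv ℝ k (⇑ψ) (L ξ)‖ ≤ S / (1 + ‖L ξ‖) ^ k := by
    rw [le_div_iff₀ (by positivity)]
    calc ‖iteratedFDeriv ℝ k (⇑ψ) (L ξ)‖ * (1 + ‖L ξ‖) ^ k
        = (1 + ‖L ξ‖) ^ k * ‖iteratedFDeriv ℝ k (⇑ψ) (L ξ)‖ := mul_comm _ _
      _ ≤ S := hdecay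
  have hkey : |c| ^ k * (1 + ‖ξ‖) ^ k ≤ (1 + ‖L ξ‖) ^ k := by
    rw [← mul_pow]
    apply pow_le_pow_left₀ (by positivity)
    rw [hLξ, mul_add, mul_one]
    linarith
  have hrpow : (1 + ‖ξ‖) ^ (-(k : ℝ)) = ((1 + ‖ξ‖) ^ k)⁻¹ := by
    rw [Real.rpow_neg (le_of_lt h1ξ), Real.rpow_natCast]
  rw [hrpow]
  have h2' : S * |c| ^ k * (1 + ‖ξ‖) ^ k ≤ S * (1 + ‖L ξ‖) ^ k := by
    rw [mul_assoc]
    exact mul_le_mul_of_nonneg_left hkey hS0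
  calc ‖(iteratedFDeriv ℝ k (⇑ψ) (L ξ)).compContinuousLinearMap fun _ => L‖
      ≤ ‖iteratedFDeriv ℝ k (⇑ψ) (L ξ)‖ * ∏ _i : Fin k, ‖L‖ :=
        ContinuousMultilinearMap.norm_compContinuousLinearMap_le _ _
    _ = ‖iteratedFDeriv ℝ k (⇑ψ) (L ξ)‖ * ‖L‖ ^ k := by
        rw [Finset.prod_const, Finset.card_univ, Fintype.card_fin]
    _ ≤ (S / (1 + ‖L ξ‖) ^ k) * |c| ^ k := by
        apply mul_le_mul hψle (pow_le_pow_left₀ (norm_nonneg _) hLnorm k)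
          (by positivity) (by positivity)
    _ = S * |c| ^ k / (1 + ‖L ξ‖) ^ k := by ring
    _ ≤ S * ((1 + ‖ξ‖) ^ k)⁻¹ := by
        rw [div_le_iff₀ (by positivity)]
        calc S * |c| ^ k = S * |c| ^ k * (1 + ‖ξ‖) ^ k * ((1 + ‖ξ‖) ^ k)⁻¹ := by
              field_simp
          _ ≤ S * (1 + ‖L ξ‖) ^ k * ((1 + ‖ξ‖) ^ k)⁻¹ := by
              gcongr
          _ = S * ((1 + ‖ξ‖) ^ k)⁻¹ * (1 + ‖L ξ‖) ^ k := by ring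
    _ ≤ (S + 1) * ((1 + ‖ξ‖) ^ k)⁻¹ := by
        gcongr
        linarith
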